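/- Let n ≥ 2 and l ≥ 1. The essential height of the set of non-n-divisible words over an l-letter alphabet, over the set of words of length less than n, is less than Υ(n,l) = 2·n^{3·⌈log_3 n⌉ + 4}·l. Concretely: in any non-n-divisible word W over the alphabet, the number of pairwise disjoint maximal periodic fragments of the form x^{2n} (with |x| < n, the fragments separated by subwords of length > n comparable with the preceding period) is less than 2·n^{3·⌈log_3 n⌉+4}·l. -/

import Mathlib

/-- `W` is `n`-divisible. -/
def IsNDivisible {α : Type*} [LinearOrder α] (n : ℕ) (W : List α) : Prop :=
  ∃ (v : List α) (us : List (List α)), us.length = n ∧ (∀ u ∈ us, u ≠ []) ∧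
    W = v ++ us.flatten ∧ us.Chain' (fun a b => b < a)


namespace Aux
variable {α : Type*}

lemma getElem?_take_of_lt (l : List α) {i n : ℕ} (h : i < n) : (l.take n)[i]? = l[i]? := by
  simp [List.getElem?_take, h]

lemma gtd (W : List α) (s μ e : ℕ) (h : e < μ) : ((W.drop s).take μ)[e]? = W[s + e]? := by
  rw [getElem?_take_of_lt _ h, List.getElem?_drop]

lemma takePT {A B : List α} {e : ℕ} (h : A.take e = B.take e) {e' : ℕ} (h' : e' < e) :
    A[e']? = B[e']? := by
  rw [← getElem?_take_of_lt A h', h, getElem?_take_of_lt B h']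

lemma lexlt [LinearOrder α] : ∀ (d : ℕ) (A B : List α),
    (∀ e, e < d → e < B.length → B[e]? = A[e]?) →
    d < A.length →
    (∀ u v, A[d]? = some u → B[d]? = some v → v < u) →
    B < A := by
  intro d
  induction d with
  | zero =>
    intro A B _ h2 h3
    match A, h2 with
    | a :: A', _ =>
      match B with
      | [] => exact List.Lex.nil
      | b :: B' =>
        have : b < a := h3 a b (by simp) (by simp)
        exact List.Lex.rel this
  | succ d ih =>
    intro A B h1 h2 h3
    match A, h2 with
    | a :: A', h2 =>
      match B with
      | [] => exact List.Lex.nil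
      | b :: B' =>
        have hba : b = a := by
          have := h1 0 (Nat.succ_pos d) (by simp)
          simpa using this
        subst hba
        refine List.Lex.cons ?_
        show (B' : List α) < A'
        refine ih A' B' ?_ (by simpa using h2) ?_
        · intro e he heB
          have := h1 (e+1) (by omega) (by simpa using Nat.succ_lt_succ heB)
          simpa using this
        · intro u v hu hv
          exact h3 u v (by simpa using hu) (by simpa using hv)

lemma fd : ∀ (A B : List α), A.length = B.length → A ≠ B →
    ∃ e, e < B.length ∧ A.take e = B.take e ∧
      ∃ u v, A[e]? = some u ∧ B[e]? = some v ∧ u ≠ v := by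
  intro A
  induction A with
  | nil => intro B hl hne; cases B <;> simp_all
  | cons a A' ih =>
    intro B hl hne
    match B with
    | [] => simp at hl
    | b :: B' =>
      by_cases hab : a = b
      · subst hab
        have hne' : A' ≠ B' := fun h => hne (by rw [h])
        obtain ⟨e, he, ht, u, v, hu, hv, huv⟩ := ih B' (by simpa using hl) hne'
        exact ⟨e+1, by simpa using Nat.succ_lt_succ he, by simp [ht], u, v, by simpa using hu,
          by simpa using hv, huv⟩
      · exact ⟨0, by simp, by simp, a, b, by simp, by simp, hab⟩

lemma lexdiff [LinearOrder α] {A B : List α} (h : A < B) (hl : A.length = B.length) :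
    ∃ e, e < B.length ∧ A.take e = B.take e ∧
      ∃ u v, A[e]? = some u ∧ B[e]? = some v ∧ u < v := by
  obtain ⟨e, he, ht, u, v, hu, hv, huv⟩ := fd A B hl (ne_of_lt h)
  refine ⟨e, he, ht, u, v, hu, hv, ?_⟩
  rcases lt_or_gt_of_ne huv with h' | h'
  · exact h'
  · exfalso
    have : B < A := by
      refine lexlt e A B ?_ (by omega) ?_
      · intro e' he' _; exact (takePT ht he').symm
      · intro u' v' hu' hv'
        rw [hu] at hu'; rw [hv] at hv'
        cases hu'; cases hv'; exact h'
    exact absurd h (not_lt_of_gt this)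

lemma flat_succ (k : ℕ) (x : List α) :
    (List.replicate (k+1) x).flatten = x ++ (List.replicate k x).flatten := by
  rw [List.replicate_succ, List.flatten_cons]

lemma flat_drop (x : List α) : ∀ (a k : ℕ), a ≤ k →
    ((List.replicate k x).flatten).drop (a * x.length) = (List.replicate (k - a) x).flatten := by
  intro a
  induction a with
  | zero => intro k _; simp
  | succ a ih =>
    intro k hk
    match k, hk with
    | k + 1, hk =>
      have : (a+1) * x.length = x.length + a * x.length := by ring
      rw [this, ← List.drop_drop, flat_succ, List.drop_left, ih k (by omega),
        Nat.succ_sub_succ]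

lemma flat_take (x : List α) : ∀ (a k : ℕ), a ≤ k →
    ((List.replicate k x).flatten).take (a * x.length) = (List.replicate a x).flatten := by
  intro a
  induction a with
  | zero => intro k _; simp
  | succ a ih =>
    intro k hk
    match k, hk with
    | k + 1, hk =>
      have h1 : (a+1) * x.length = x.length + a * x.length := by ring
      rw [h1, List.take_add, flat_succ, List.take_left, List.drop_left, ih k (by omega),
        ← flat_succ]

end Aux
namespace Aux
variable {α : Type*}

/-- Segment of a fragment: `b` full periods starting at block `a`. -/
lemma seg {W : List α} {Q m : ℕ} {x : List α} {N : ℕ}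
    (hoc : (W.drop Q).take (N * m) = (List.replicate N x).flatten)
    (hm : x.length = m) :
    ∀ a b, a + b ≤ N → (W.drop (Q + a * m)).take (b * m) = (List.replicate b x).flatten := by
  intro a b hab
  have h1 : W.drop (Q + a * m) = (W.drop Q).drop (a * m) := by
    rw [List.drop_drop, Nat.add_comm]
  have h2 : ((W.drop Q).take (N * m)).drop (a * m)
      = ((W.drop Q).drop (a * m)).take (N * m - a * m) := List.drop_take ..
  have h3 : N * m - a * m = (N - a) * m := by
    rw [← Nat.sub_mul]
  have h4 : ((W.drop Q).drop (a * m)).take ((N - a) * m)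
      = (List.replicate (N - a) x).flatten := by
    rw [← h3, ← h2, hoc, ← hm, flat_drop x a N (by omega)]
  have h5 : b * m ≤ (N - a) * m := Nat.mul_le_mul_right m (by omega)
  calc (W.drop (Q + a * m)).take (b * m)
      = (((W.drop Q).drop (a * m)).take ((N - a) * m)).take (b * m) := by
        rw [List.take_take, Nat.min_eq_left h5, h1]
    _ = ((List.replicate (N - a) x).flatten).take (b * m) := by rw [h4]
    _ = (List.replicate b x).flatten := by
        rw [← hm, flat_take x b (N - a) (by omega)]

/-- Chain lemma: positions with lex-decreasing suffix data give `n`-divisibility. -/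
lemma chain_div [LinearOrder α] {n : ℕ} (hn : 2 ≤ n) (W : List α) (p : ℕ → ℕ)
    (hmono : ∀ i j, i < j → j < n → p i < p j)
    (hpair : ∀ i, i + 1 < n → ∃ d,
      p i + d < p (i+1) ∧ p (i+1) + d < W.length ∧
      (W.drop (p i)).take d = (W.drop (p (i+1))).take d ∧
      ∃ u v, W[p i + d]? = some u ∧ W[p (i+1) + d]? = some v ∧ v < u) :
    IsNDivisible n W := by
  classical
  -- last position is < W.length
  have hlastW : p (n-1) < W.length := by
    obtain ⟨d, h1, h2, _⟩ := hpair (n-2) (by omega)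
    have : n - 2 + 1 = n - 1 := by omega
    rw [this] at h2
    omega
  have hpW : ∀ k, k < n → p k < W.length := by
    intro k hk
    rcases eq_or_lt_of_le (Nat.le_sub_one_of_lt hk) with h | h
    · rw [h]; exact hlastW
    · exact lt_trans (hmono k (n-1) h (by omega)) hlastW
  set P : ℕ → ℕ := fun k => if k < n then p k else W.length with hP
  have hPn : P n = W.length := by simp [hP]
  have hPlt : ∀ k, k < n → P k < P (k+1) := by
    intro k hk
    by_cases h : k + 1 < n
    · simp only [hP, if_pos hk, if_pos h]
      exact hmono k (k+1) (by omega) h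
    · simp only [hP, if_pos hk, if_neg h]
      exact hpW k hk
  have hPle : ∀ k, k ≤ n → P k ≤ W.length := by
    intro k hk
    by_cases h : k < n
    · simp only [hP, if_pos h]; exact le_of_lt (hpW k h)
    · simp [hP, if_neg h]
  set u : ℕ → List α := fun k => (W.drop (P k)).take (P (k+1) - P k) with hu
  have hdropstep : ∀ k, k < n → W.drop (P k) = u k ++ W.drop (P (k+1)) := by
    intro k hk
    have h1 : W.drop (P (k+1)) = (W.drop (P k)).drop (P (k+1) - P k) := by
      rw [List.drop_drop, Nat.add_sub_cancel' (le_of_lt (hPlt k hk))]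
    rw [hu, h1]
    exact (List.take_append_drop _ _).symm
  have hflat : ∀ k, k ≤ n →
      W.drop (P 0) = ((List.range k).map u).flatten ++ W.drop (P k) := by
    intro k
    induction k with
    | zero => intro _; simp
    | succ k ih =>
      intro hk
      rw [List.range_succ, List.map_append, List.flatten_append]
      have := ih (by omega)
      rw [this, hdropstep k (by omega)]
      simp
  have hulen : ∀ k, k < n → (u k).length = P (k+1) - P k := by
    intro k hk
    rw [hu]
    simp only [List.length_take, List.length_drop]
    have h1 := hPlt k hk
    have h2 := hPle (k+1) (by omega)
    have h3 := hPle k (le_of_lt hk)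
    omega
  refine ⟨W.take (P 0), (List.range n).map u, by simp, ?_, ?_, ?_⟩
  · -- nonempty
    intro w hw
    simp only [List.mem_map, List.mem_range] at hw
    obtain ⟨k, hk, rfl⟩ := hw
    intro hnil
    have h1 := hulen k hk
    rw [hnil] at h1
    have h2 := hPlt k hk
    simp only [List.length_nil] at h1
    omega
  · -- decomposition
    have := hflat n (le_refl n)
    rw [hPn] at this
    simp only [List.drop_length, List.append_nil] at this
    rw [← this, List.take_append_drop]
  · -- chain
    rw [show List.Chain' _ _ ↔ List.IsChain _ _ from Iff.rfl, List.isChain_iff_getElem]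
    intro i hi
    simp only [List.length_map, List.length_range] at hi
    have hgeti : ∀ j (h : j < n),
        ((List.range n).map u)[j]'(by simpa using h) = u j := by
      intro j h
      simp
    rw [hgeti i (by omega), hgeti (i+1) (by omega)]
    -- show u (i+1) < u i
    obtain ⟨d, hd1, hd2, hteq, uu, vv, huu, hvv, hlt⟩ := hpair i (by omega)
    have hiP : P i = p i := by simp [hP]; omega
    have hi1P : P (i+1) = p (i+1) := by simp [hP]; omega
    have hAlen : (u i).length = p (i+1) - p i := by rw [hulen i (by omega), hiP, hi1P]
    have hBsub : (u (i+1)).length ≤ P (i+2) - P (i+1) := by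
      rw [hu]; simp [List.length_take]
    -- getElem? of u blocks
    have hgetA : ∀ e, e < (u i).length → (u i)[e]? = W[p i + e]? := by
      intro e he
      rw [hu]
      have : e < P (i+1) - P i := by rw [← hulen i (by omega)]; exact he
      rw [gtd W (P i) _ e this, hiP]
    have hgetB : ∀ e, e < (u (i+1)).length → (u (i+1))[e]? = W[p (i+1) + e]? := by
      intro e he
      rw [hu]
      have : e < P (i+2) - P (i+1) := lt_of_lt_of_le he hBsub
      rw [gtd W (P (i+1)) _ e this, hi1P]
    show u (i+1) < u i
    refine lexlt d (u i) (u (i+1)) ?_ ?_ ?_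
    · intro e he heB
      rw [hgetB e heB, hgetA e (by omega)]
      have h1 : W[p (i+1) + e]? = ((W.drop (p (i+1))).take d)[e]? := (gtd W _ d e he).symm
      have h2 : W[p i + e]? = ((W.drop (p i)).take d)[e]? := (gtd W _ d e he).symm
      rw [h1, h2, hteq]
    · omega
    · intro u' v' hu' hv'
      rw [hgetA d (by omega), huu] at hu'
      cases hu'
      have hdB : d < (u (i+1)).length := by
        by_contra h
        push_neg at h
        rw [List.getElem?_eq_none h] at hv'
        exact absurd hv' (by simp)
      rw [hgetB d hdB, hvv] at hv'
      cases hv'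
      exact hlt

end Aux
namespace Aux
variable {α : Type*}

/-- Wrapper: equal-length lex-decreasing window words at separated positions. -/
lemma clw [LinearOrder α] {n : ℕ} (hn : 2 ≤ n) (W : List α) (μ : ℕ) (hμ : 1 ≤ μ)
    (p : ℕ → ℕ)
    (hfull : ∀ i, i < n → p i + μ ≤ W.length)
    (hgap : ∀ i j, i < j → j < n → p i + μ ≤ p j)
    (hdec : ∀ i, i + 1 < n → (W.drop (p (i+1))).take μ < (W.drop (p i)).take μ) :
    IsNDivisible n W := by
  refine chain_div hn W p ?_ ?_
  · intro i j hij hj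
    have := hgap i j hij hj
    omega
  · intro i hi
    have hlenA : ((W.drop (p i)).take μ).length = μ := by
      simp only [List.length_take, List.length_drop]
      have := hfull i (by omega); omega
    have hlenB : ((W.drop (p (i+1))).take μ).length = μ := by
      simp only [List.length_take, List.length_drop]
      have := hfull (i+1) hi; omega
    obtain ⟨e, he, hteq, u, v, hu, hv, hlt⟩ :=
      lexdiff (hdec i hi) (by rw [hlenA, hlenB])
    rw [hlenA] at he
    refine ⟨e, ?_, ?_, ?_⟩
    · have := hgap i (i+1) (by omega) hi; omega
    · have := hfull (i+1) hi; omega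
    · constructor
      · -- take agreement
        have h1 : (W.drop (p i)).take e = ((W.drop (p i)).take μ).take e := by
          rw [List.take_take, Nat.min_eq_left (le_of_lt he)]
        have h2 : (W.drop (p (i+1))).take e = ((W.drop (p (i+1))).take μ).take e := by
          rw [List.take_take, Nat.min_eq_left (le_of_lt he)]
        rw [h1, h2, hteq]
      · refine ⟨v, u, ?_, ?_, hlt⟩
        · rw [← gtd W (p i) μ e he, hv]
        · rw [← gtd W (p (i+1)) μ e he, hu]

end Aux
namespace Aux

lemma lemR {l n : ℕ} (hn : 2 ≤ n) (W : List (Fin l)) (hW : ¬ IsNDivisible n W) :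
    ∀ (c m : ℕ), 1 ≤ m → m ≤ 3^c → m < n →
    ∀ P : Finset ℕ,
      (∀ p ∈ P, p + m ≤ W.length) →
      (∀ p ∈ P, ∀ p' ∈ P, p < p' → p + n ≤ p') →
      Set.InjOn (fun p => (W.drop p).take m) ↑P →
      P.card ≤ 3^c * (n-1)^(3*c) * l := by
  intro c
  induction c with
  | zero =>
    intro m hm1 hm3 hmn P hfull hgap hinj
    have hm : m = 1 := by simpa using le_antisymm hm3 hm1
    subst hm
    have hsub : P.image (fun p => (W.drop p).take 1) ⊆
        (Finset.univ : Finset (Fin l)).image (fun a => [a]) := by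
      intro L hL
      simp only [Finset.mem_image] at hL ⊢
      obtain ⟨p, hp, rfl⟩ := hL
      have hlen : ((W.drop p).take 1).length = 1 := by
        simp only [List.length_take, List.length_drop]
        have := hfull p hp; omega
      obtain ⟨a, ha⟩ := List.length_eq_one_iff.mp hlen
      exact ⟨a, Finset.mem_univ a, ha.symm⟩
    calc P.card = (P.image (fun p => (W.drop p).take 1)).card :=
          (Finset.card_image_of_injOn hinj).symm
      _ ≤ ((Finset.univ : Finset (Fin l)).image (fun a => [a])).card :=
          Finset.card_le_card hsub
      _ ≤ l := le_trans Finset.card_image_le (by simp)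
      _ ≤ 3^0 * (n-1)^(3*0) * l := by simp
  | succ c ih =>
    intro m hm1 hm3 hmn P hfull hgap hinj
    classical
    set T := 3^c with hT
    have hT1 : 1 ≤ T := Nat.one_le_pow _ _ (by omega)
    have hm3T : m ≤ 3 * T := by
      rw [hT]; calc m ≤ 3^(c+1) := hm3
        _ = 3 * 3^c := by rw [pow_succ]; ring
    set m₁ := min m T with hm₁
    set m₂ := min (m - m₁) T with hm₂
    set m₃ := m - m₁ - m₂ with hm₃
    have hm₁1 : 1 ≤ m₁ := by omega
    have hm₁T : m₁ ≤ T := by omega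
    have hm₂T : m₂ ≤ T := by omega
    have hm₃T : m₃ ≤ T := by omega
    have hsum : m₁ + m₂ + m₃ = m := by omega
    set G : ℕ → ℕ → ℕ → List (Fin l) := fun δ μ p => (W.drop (p + δ)).take μ with hG
    set B := 3^c * (n-1)^(3*c) * l with hB
    -- no strictly decreasing chain of length n in any part order
    have hnochain : ∀ δ μ, δ + μ ≤ m → ∀ S : Finset ℕ, S ⊆ P →
        (∀ a ∈ S, ∀ b ∈ S, a < b → G δ μ b < G δ μ a) → S.card ≤ n - 1 := by
      intro δ μ hδμ S hSP hanti
      by_contra hcon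
      push_neg at hcon
      have hnS : n ≤ S.card := by omega
      obtain ⟨S', hS'S, hS'card⟩ := Finset.exists_subset_card_eq hnS
      have hS'P : ∀ a ∈ S', a ∈ P := fun a ha => hSP (hS'S ha)
      have hμpos : 1 ≤ μ := by
        by_contra hμ0
        push_neg at hμ0
        have hμz : μ = 0 := by omega
        have h2 : 1 < S'.card := by omega
        obtain ⟨a, ha, b, hb, hab⟩ := Finset.one_lt_card.mp h2
        rcases lt_or_gt_of_ne hab with h | h
        · have := hanti a (hS'S ha) b (hS'S hb) h
          rw [hμz] at this
          simp only [hG, List.take_zero] at this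
          exact lt_irrefl _ this
        · have := hanti b (hS'S hb) a (hS'S ha) h
          rw [hμz] at this
          simp only [hG, List.take_zero] at this
          exact lt_irrefl _ this
      set e := S'.orderIsoOfFin hS'card with he
      set pp : ℕ → ℕ := fun i => if h : i < n then ((e ⟨i, h⟩ : ℕ) + δ) else 0 with hpp
      have hemem : ∀ (i : Fin n), (e i : ℕ) ∈ S' := fun i => (e i).2
      have hemono : ∀ (i j : Fin n), i < j → (e i : ℕ) < (e j : ℕ) := by
        intro i j hij
        exact e.strictMono hij
      refine hW (clw hn W μ hμpos pp ?_ ?_ ?_)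
      · intro i hi
        simp only [hpp, dif_pos hi]
        have hmem : (e ⟨i, hi⟩ : ℕ) ∈ P := hS'P _ (hemem _)
        have := hfull _ hmem
        omega
      · intro i j hij hj
        have hi : i < n := by omega
        simp only [hpp, dif_pos hi, dif_pos hj]
        have h1 : (e ⟨i, hi⟩ : ℕ) < (e ⟨j, hj⟩ : ℕ) := hemono _ _ (by simpa using hij)
        have h2 := hgap _ (hS'P _ (hemem ⟨i, hi⟩)) _ (hS'P _ (hemem ⟨j, hj⟩)) h1
        omega
      · intro i hi
        have hi' : i < n := by omega
        simp only [hpp, dif_pos hi, dif_pos hi']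
        have h1 : (e ⟨i, hi'⟩ : ℕ) < (e ⟨i+1, hi⟩ : ℕ) := hemono _ _ (by simp)
        have := hanti _ (hS'S (hemem ⟨i, hi'⟩)) _ (hS'S (hemem ⟨i+1, hi⟩)) h1
        simpa [hG] using this
    -- ranks
    set pred : ℕ → ℕ → ℕ → ℕ → Prop := fun δ μ p k => ∃ S : Finset ℕ,
      S ⊆ P ∧ p ∈ S ∧ (∀ a ∈ S, a ≤ p) ∧
      (∀ a ∈ S, ∀ b ∈ S, a < b → G δ μ b < G δ μ a) ∧ S.card = k with hpredd
    set ρ : ℕ → ℕ → ℕ → ℕ := fun δ μ p => Nat.findGreatest (pred δ μ p) (n-1) with hρ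
    have hsingle : ∀ δ μ (p : ℕ), p ∈ P → pred δ μ p 1 := by
      intro δ μ p hp
      refine ⟨{p}, by simpa using hp, by simp, by simp, ?_, by simp⟩
      intro a ha b hb hab
      simp only [Finset.mem_singleton] at ha hb
      exact absurd hab (by omega)
    have hρ1 : ∀ δ μ (p : ℕ), p ∈ P → 1 ≤ ρ δ μ p := by
      intro δ μ p hp
      exact Nat.le_findGreatest (P := pred δ μ p) (m := 1) (n := n - 1) (by omega) (hsingle δ μ p hp)
    have hρle : ∀ δ μ (p : ℕ), ρ δ μ p ≤ n - 1 := by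
      intro δ μ p; exact Nat.findGreatest_le _
    have hρspec : ∀ δ μ (p : ℕ), p ∈ P → ∃ S : Finset ℕ,
        S ⊆ P ∧ p ∈ S ∧ (∀ a ∈ S, a ≤ p) ∧
        (∀ a ∈ S, ∀ b ∈ S, a < b → G δ μ b < G δ μ a) ∧ S.card = ρ δ μ p := by
      intro δ μ p hp
      exact Nat.findGreatest_spec (P := pred δ μ p) (m := 1) (n := n - 1) (by omega)
        (hsingle δ μ p hp)
    have hinc : ∀ δ μ, δ + μ ≤ m → ∀ p ∈ P, ∀ p' ∈ P, p < p' →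
        G δ μ p' < G δ μ p → ρ δ μ p + 1 ≤ ρ δ μ p' := by
      intro δ μ hδμ p hp p' hp' hpp' hGlt
      obtain ⟨S, hSP, hpS, hSle, hanti, hScard⟩ := hρspec δ μ p hp
      have hp'S : p' ∉ S := fun h => by have := hSle p' h; omega
      have hanti' : ∀ a ∈ insert p' S, ∀ b ∈ insert p' S, a < b →
          G δ μ b < G δ μ a := by
        intro a ha b hb hab
        rcases Finset.mem_insert.mp hb with rfl | hbS
        · rcases Finset.mem_insert.mp ha with rfl | haS
          · exact absurd hab (lt_irrefl _)
          · rcases eq_or_lt_of_le (hSle a haS) with rfl | h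
            · exact hGlt
            · exact lt_trans hGlt (hanti a haS p hpS h)
        · rcases Finset.mem_insert.mp ha with rfl | haS
          · exact absurd hab (by have := hSle b hbS; omega)
          · exact hanti a haS b hbS hab
      have hcard' : (insert p' S).card = ρ δ μ p + 1 := by
        rw [Finset.card_insert_of_notMem hp'S, hScard]
      have hbnd : ρ δ μ p + 1 ≤ n - 1 := by
        have := hnochain δ μ hδμ (insert p' S)
          (Finset.insert_subset hp' hSP) hanti'
        omega
      refine Nat.le_findGreatest (P := pred δ μ p') hbnd ?_
      refine ⟨insert p' S, Finset.insert_subset hp' hSP, Finset.mem_insert_self _ _, ?_,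
        hanti', hcard'⟩
      intro a ha
      rcases Finset.mem_insert.mp ha with rfl | haS
      · exact le_refl _
      · have := hSle a haS; omega
    have hwk : ∀ δ μ, δ + μ ≤ m → ∀ p ∈ P, ∀ p' ∈ P, p < p' →
        ρ δ μ p = ρ δ μ p' → G δ μ p ≤ G δ μ p' := by
      intro δ μ hδμ p hp p' hp' hpp' hρeq
      by_contra hle
      have : G δ μ p' < G δ μ p := lt_of_not_ge hle
      have := hinc δ μ hδμ p hp p' hp' hpp' this
      omega
    -- fiber partition by rank triples
    set φ : ℕ → ℕ × ℕ × ℕ := fun p => (ρ 0 m₁ p, ρ m₁ m₂ p, ρ (m₁+m₂) m₃ p) with hφ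
    set R : Finset (ℕ × ℕ × ℕ) :=
      Finset.Icc 1 (n-1) ×ˢ (Finset.Icc 1 (n-1) ×ˢ Finset.Icc 1 (n-1)) with hR
    have hd1 : (0:ℕ) + m₁ ≤ m := by omega
    have hd2 : m₁ + m₂ ≤ m := by omega
    have hd3 : (m₁ + m₂) + m₃ ≤ m := by omega
    have hmemR : ∀ p ∈ P, φ p ∈ R := by
      intro p hp
      simp only [hφ, hR, Finset.mem_product, Finset.mem_Icc]
      exact ⟨⟨hρ1 _ _ p hp, hρle _ _ p⟩, ⟨hρ1 _ _ p hp, hρle _ _ p⟩,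
        ⟨hρ1 _ _ p hp, hρle _ _ p⟩⟩
    have hcardsum : P.card = ∑ v ∈ R, (P.filter fun p => φ p = v).card :=
      Finset.card_eq_sum_card_fiberwise hmemR
    have hfiber : ∀ v ∈ R, (P.filter fun p => φ p = v).card ≤ 3 * B := by
      intro v _
      set C := P.filter (fun p => φ p = v) with hC
      rcases C.eq_empty_or_nonempty with hCe | hCne
      · rw [hCe]; simp
      · obtain ⟨p₀, hp₀⟩ := hCne
        have hCP : C ⊆ P := Finset.filter_subset _ _
        have hl1 : 1 ≤ l := by
          have h := hfull p₀ (hCP hp₀)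
          match W, h with
          | a :: W', _ => exact a.pos
          | [], h => simp only [List.length_nil] at h; omega
        have hB1 : 1 ≤ B := by
          rw [hB]
          have h1 : 1 ≤ 3^c := Nat.one_le_pow _ _ (by omega)
          have h2 : 1 ≤ (n-1)^(3*c) := Nat.one_le_pow _ _ (by omega)
          calc 1 = 1 * 1 * 1 := by ring
            _ ≤ 3^c * (n-1)^(3*c) * l := by
                exact Nat.mul_le_mul (Nat.mul_le_mul h1 h2) hl1
        have hρeqC : ∀ p ∈ C, ∀ p' ∈ C, ρ 0 m₁ p = ρ 0 m₁ p' ∧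
            ρ m₁ m₂ p = ρ m₁ m₂ p' ∧ ρ (m₁+m₂) m₃ p = ρ (m₁+m₂) m₃ p' := by
          intro p hp p' hp'
          have h1 : φ p = v := (Finset.mem_filter.mp hp).2
          have h2 : φ p' = v := (Finset.mem_filter.mp hp').2
          have h3 : φ p = φ p' := by rw [h1, h2]
          exact ⟨congrArg (fun z : ℕ × ℕ × ℕ => z.1) h3,
            congrArg (fun z : ℕ × ℕ × ℕ => z.2.1) h3,
            congrArg (fun z : ℕ × ℕ × ℕ => z.2.2) h3⟩
        have hwkC : ∀ δ μ, δ + μ ≤ m →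
            (∀ p ∈ C, ∀ p' ∈ C, ρ δ μ p = ρ δ μ p') →
            ∀ p ∈ C, ∀ p' ∈ C, p < p' → G δ μ p ≤ G δ μ p' := by
          intro δ μ hδμ hre p hp p' hp' hlt
          exact hwk δ μ hδμ p (hCP hp) p' (hCP hp') hlt (hre p hp p' hp')
        -- bound on number of distinct part-values
        have hDB : ∀ δ μ, δ + μ ≤ m → μ ≤ T → (C.image (G δ μ)).card ≤ B := by
          intro δ μ hδμ hμT
          rcases Nat.eq_zero_or_pos μ with hμ0 | hμpos
          · have : C.image (G δ μ) ⊆ {[]} := by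
              intro L hL
              simp only [Finset.mem_image] at hL
              obtain ⟨p, _, rfl⟩ := hL
              simp [hG, hμ0]
            calc (C.image (G δ μ)).card ≤ ({[]} : Finset (List (Fin l))).card :=
                Finset.card_le_card this
              _ = 1 := Finset.card_singleton _
              _ ≤ B := hB1
          · set Ck := C.filter (fun p => ∀ p' ∈ C, p' < p → G δ μ p' ≠ G δ μ p) with hCk
            have hCkC : Ck ⊆ C := Finset.filter_subset _ _
            have him : C.image (G δ μ) ⊆ Ck.image (G δ μ) := by
              intro L hL
              simp only [Finset.mem_image] at hL
              obtain ⟨p₁, hp₁, rfl⟩ := hL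
              set Q := C.filter (fun p => G δ μ p = G δ μ p₁) with hQ
              have hQne : Q.Nonempty := ⟨p₁, by simp [hQ, hp₁]⟩
              set q₀ := Q.min' hQne with hq₀
              have hq₀Q : q₀ ∈ Q := Finset.min'_mem _ _
              have hq₀C : q₀ ∈ C := (Finset.mem_filter.mp hq₀Q).1
              have hq₀v : G δ μ q₀ = G δ μ p₁ := (Finset.mem_filter.mp hq₀Q).2
              refine Finset.mem_image.mpr ⟨q₀, ?_, hq₀v⟩
              rw [hCk, Finset.mem_filter]
              refine ⟨hq₀C, ?_⟩
              intro p' hp' hlt heq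
              have : p' ∈ Q := by
                rw [hQ, Finset.mem_filter]
                exact ⟨hp', by rw [heq, hq₀v]⟩
              have := Finset.min'_le Q p' this
              omega
            have hinjk : Set.InjOn (G δ μ) ↑Ck := by
              intro a ha b hb heq
              simp only [Finset.mem_coe] at ha hb
              by_contra hne
              rcases lt_or_gt_of_ne hne with hlt | hlt
              · have := (Finset.mem_filter.mp hb).2 a (hCkC ha) hlt
                exact this heq
              · have := (Finset.mem_filter.mp ha).2 b (hCkC hb) hlt
                exact this heq.symm
            have hμn : μ < n := by omega
            have haddinj : Function.Injective (fun p : ℕ => p + δ) := by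
              intro a b h; simpa using h
            have hIH := ih μ hμpos hμT hμn (Ck.image (fun p => p + δ)) ?_ ?_ ?_
            · have h1 : (Ck.image (fun p => p + δ)).card = Ck.card :=
                Finset.card_image_of_injective _ haddinj
              calc (C.image (G δ μ)).card ≤ (Ck.image (G δ μ)).card :=
                  Finset.card_le_card him
                _ ≤ Ck.card := Finset.card_image_le
                _ = (Ck.image (fun p => p + δ)).card := h1.symm
                _ ≤ B := by rw [hB]; exact hIH
            · intro p hp
              simp only [Finset.mem_image] at hp
              obtain ⟨p', hp', rfl⟩ := hp
              have := hfull p' (hCP (hCkC hp'))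
              omega
            · intro p hp p' hp' hlt
              simp only [Finset.mem_image] at hp hp'
              obtain ⟨a, ha, rfl⟩ := hp
              obtain ⟨b, hb, rfl⟩ := hp'
              have := hgap a (hCP (hCkC ha)) b (hCP (hCkC hb)) (by omega)
              omega
            · intro a ha b hb heq
              simp only [Finset.mem_coe, Finset.mem_image] at ha hb
              obtain ⟨a', ha', rfl⟩ := ha
              obtain ⟨b', hb', rfl⟩ := hb
              simp only at heq
              have : G δ μ a' = G δ μ b' := heq
              have := hinjk (Finset.mem_coe.mpr ha') (Finset.mem_coe.mpr hb') this
              rw [this]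
        -- the three part terms
        have hsplit : ∀ p : ℕ,
            (W.drop p).take m = G 0 m₁ p ++ (G m₁ m₂ p ++ G (m₁+m₂) m₃ p) := by
          intro p
          have h0 : m = m₁ + (m₂ + m₃) := by omega
          rw [hG]
          simp only
          have h4 : p + m₁ + m₂ = p + (m₁ + m₂) := by omega
          rw [h0, List.take_add, List.take_add, List.drop_drop, List.drop_drop,
            Nat.add_zero p, h4]
        -- counting within the fiber
        set t1 : ℕ → Finset (List (Fin l)) := fun p => (C.filter (· ≤ p)).image (G 0 m₁)
          with ht1
        set t2 : ℕ → Finset (List (Fin l)) := fun p => (C.filter (· ≤ p)).image (G m₁ m₂)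
          with ht2
        set t3 : ℕ → Finset (List (Fin l)) := fun p =>
          (C.filter (· ≤ p)).image (G (m₁+m₂) m₃) with ht3
        set hh : ℕ → ℕ := fun p => (t1 p).card + (t2 p).card + (t3 p).card with hhh
        set D1 := (C.image (G 0 m₁)).card with hD1
        set D2 := (C.image (G m₁ m₂)).card with hD2
        set D3 := (C.image (G (m₁+m₂) m₃)).card with hD3
        have hfilmono : ∀ p p' : ℕ, p ≤ p' → C.filter (· ≤ p) ⊆ C.filter (· ≤ p') := by
          intro p p' hle
          intro a ha
          rw [Finset.mem_filter] at ha ⊢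
          exact ⟨ha.1, by omega⟩
        have htmono : ∀ (δ μ : ℕ) (p p' : ℕ), p ≤ p' →
            ((C.filter (· ≤ p)).image (G δ μ)).card ≤
              ((C.filter (· ≤ p')).image (G δ μ)).card := by
          intro δ μ p p' hle
          exact Finset.card_le_card (Finset.image_subset_image (hfilmono p p' hle))
        have htstrict : ∀ (δ μ : ℕ), δ + μ ≤ m →
            (∀ a ∈ C, ∀ a' ∈ C, ρ δ μ a = ρ δ μ a') →
            ∀ p ∈ C, ∀ p' ∈ C, p < p' → G δ μ p < G δ μ p' →
            ((C.filter (· ≤ p)).image (G δ μ)).card <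
              ((C.filter (· ≤ p')).image (G δ μ)).card := by
          intro δ μ hδμ hre p hp p' hp' hlt hGlt
          apply Finset.card_lt_card
          rw [Finset.ssubset_iff_of_subset
            (Finset.image_subset_image (hfilmono p p' (by omega)))]
          refine ⟨G δ μ p', Finset.mem_image.mpr ⟨p', Finset.mem_filter.mpr
            ⟨hp', le_refl _⟩, rfl⟩, ?_⟩
          intro hmem
          obtain ⟨a, haf, heq⟩ := Finset.mem_image.mp hmem
          have haC : a ∈ C := (Finset.mem_filter.mp haf).1
          have hap : a ≤ p := (Finset.mem_filter.mp haf).2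
          have h5 : G δ μ a ≤ G δ μ p := by
            rcases eq_or_lt_of_le hap with rfl | h
            · exact le_refl _
            · exact hwkC δ μ hδμ hre a haC p hp h
          have : G δ μ a < G δ μ p' := lt_of_le_of_lt h5 hGlt
          rw [heq] at this
          exact lt_irrefl _ this
        have hρe1 := fun p hp p' hp' => (hρeqC p hp p' hp').1
        have hρe2 := fun p hp p' hp' => (hρeqC p hp p' hp').2.1
        have hρe3 := fun p hp p' hp' => (hρeqC p hp p' hp').2.2
        have hhstrict : ∀ p ∈ C, ∀ p' ∈ C, p < p' → hh p < hh p' := by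
          intro p hp p' hp' hlt
          have hne : G 0 m₁ p ≠ G 0 m₁ p' ∨ G m₁ m₂ p ≠ G m₁ m₂ p' ∨
              G (m₁+m₂) m₃ p ≠ G (m₁+m₂) m₃ p' := by
            by_contra hall
            push_neg at hall
            obtain ⟨e1, e2, e3⟩ := hall
            have : (W.drop p).take m = (W.drop p').take m := by
              rw [hsplit p, hsplit p', e1, e2, e3]
            have := hinj (Finset.mem_coe.mpr (hCP hp)) (Finset.mem_coe.mpr (hCP hp')) this
            omega
          have hm1' := htmono 0 m₁ p p' (by omega)
          have hm2' := htmono m₁ m₂ p p' (by omega)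
          have hm3' := htmono (m₁+m₂) m₃ p p' (by omega)
          rcases hne with hne | hne | hne
          · have hGlt : G 0 m₁ p < G 0 m₁ p' :=
              lt_of_le_of_ne (hwkC 0 m₁ hd1 hρe1 p hp p' hp' hlt) hne
            have := htstrict 0 m₁ hd1 hρe1 p hp p' hp' hlt hGlt
            simp only [hhh, ht1, ht2, ht3]
            omega
          · have hGlt : G m₁ m₂ p < G m₁ m₂ p' :=
              lt_of_le_of_ne (hwkC m₁ m₂ hd2 hρe2 p hp p' hp' hlt) hne
            have := htstrict m₁ m₂ hd2 hρe2 p hp p' hp' hlt hGlt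
            simp only [hhh, ht1, ht2, ht3]
            omega
          · have hGlt : G (m₁+m₂) m₃ p < G (m₁+m₂) m₃ p' :=
              lt_of_le_of_ne (hwkC (m₁+m₂) m₃ hd3 hρe3 p hp p' hp' hlt) hne
            have := htstrict (m₁+m₂) m₃ hd3 hρe3 p hp p' hp' hlt hGlt
            simp only [hhh, ht1, ht2, ht3]
            omega
        have hhmaps : ∀ p ∈ C, hh p ∈ Finset.Icc 1 (D1 + D2 + D3) := by
          intro p hp
          rw [Finset.mem_Icc]
          constructor
          · have : (t1 p).Nonempty := ⟨G 0 m₁ p, Finset.mem_image.mpr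
              ⟨p, Finset.mem_filter.mpr ⟨hp, le_refl _⟩, rfl⟩⟩
            have := Finset.card_pos.mpr this
            simp only [hhh]
            omega
          · have h1 : (t1 p).card ≤ D1 := Finset.card_le_card
              (Finset.image_subset_image (Finset.filter_subset _ _))
            have h2 : (t2 p).card ≤ D2 := Finset.card_le_card
              (Finset.image_subset_image (Finset.filter_subset _ _))
            have h3 : (t3 p).card ≤ D3 := Finset.card_le_card
              (Finset.image_subset_image (Finset.filter_subset _ _))
            simp only [hhh]
            omega
        have hhinj : Set.InjOn hh ↑C := by
          intro a ha b hb heq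
          simp only [Finset.mem_coe] at ha hb
          by_contra hne
          rcases lt_or_gt_of_ne hne with h | h
          · have := hhstrict a ha b hb h; omega
          · have := hhstrict b hb a ha h; omega
        have hCcard : C.card ≤ D1 + D2 + D3 := by
          have := Finset.card_le_card_of_injOn hh hhmaps hhinj
          simpa using this
        have hDB1 : D1 ≤ B := hDB 0 m₁ hd1 hm₁T
        have hDB2 : D2 ≤ B := hDB m₁ m₂ hd2 hm₂T
        have hDB3 : D3 ≤ B := hDB (m₁+m₂) m₃ hd3 hm₃T
        omega
    -- total
    have hRcard : R.card = (n-1) * ((n-1) * (n-1)) := by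
      rw [hR, Finset.card_product, Finset.card_product, Nat.card_Icc]
      simp
    calc P.card = ∑ v ∈ R, (P.filter fun p => φ p = v).card := hcardsum
      _ ≤ R.card • (3 * B) := Finset.sum_le_card_nsmul R _ _ hfiber
      _ = (n-1) * ((n-1) * (n-1)) * (3 * B) := by rw [hRcard, smul_eq_mul]
      _ = 3^(c+1) * (n-1)^(3*(c+1)) * l := by
          rw [hB]
          ring

end Aux
namespace Aux

lemma fiberB {l n s : ℕ} (hn : 2 ≤ n) (W : List (Fin l)) (hW : ¬ IsNDivisible n W)
    (x : Fin s → List (Fin l)) (q : Fin s → ℕ)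
    (hxlen : ∀ j, (x j).length < n) (hxne : ∀ j, x j ≠ [])
    (hocc : ∀ j, (W.drop (q j)).take (2 * n * (x j).length) =
      (List.replicate (2 * n) (x j)).flatten)
    (hcomp : ∀ j, (W.drop (q j + 2 * n * (x j).length)).take (x j).length ≠ x j)
    (hbound : ∀ j, q j + 2 * n * (x j).length + (x j).length ≤ W.length)
    (hsep : ∀ j k : Fin s, j < k → q j + 2 * n * (x j).length + n ≤ q k)
    (x₀ : List (Fin l)) :
    (Finset.univ.filter (fun j : Fin s => x j = x₀)).card ≤ 2 * n - 2 := by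
  classical
  by_contra hcon
  push_neg at hcon
  set G := Finset.univ.filter (fun j : Fin s => x j = x₀) with hGdef
  have hGcard : 2 * n - 1 ≤ G.card := by omega
  have hGmem : ∀ j ∈ G, x j = x₀ := by
    intro j hj; exact (Finset.mem_filter.mp hj).2
  obtain ⟨j₀, hj₀⟩ : G.Nonempty := Finset.card_pos.mp (by omega)
  set m := x₀.length with hm
  have hm1 : 1 ≤ m := by
    rw [hm, ← hGmem j₀ hj₀]
    have := hxne j₀
    cases hx : x j₀ with
    | nil => exact absurd hx this
    | cons a r => simp [hx]
  have hmn : m < n := by rw [hm, ← hGmem j₀ hj₀]; exact hxlen j₀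
  set t : Fin s → List (Fin l) := fun j => (W.drop (q j + 2*n*m)).take m with ht
  have hsep' : ∀ a ∈ G, ∀ b ∈ G, a < b → q a + 2*n*m + n ≤ q b := by
    intro a ha b hb hab
    have := hsep a b hab
    rw [hGmem a ha] at this
    exact this
  have hbound' : ∀ a ∈ G, q a + 2*n*m + m ≤ W.length := by
    intro a ha
    have := hbound a
    rw [hGmem a ha] at this
    exact this
  have hseg : ∀ j ∈ G, ∀ a b : ℕ, a + b ≤ 2*n →
      (W.drop (q j + a*m)).take (b*m) = (List.replicate b x₀).flatten := by
    intro j hj a b hab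
    have h0 := hocc j
    rw [hGmem j hj] at h0
    exact seg h0 rfl a b hab
  have hblk : ∀ j ∈ G, ∀ a : ℕ, a < 2*n → (W.drop (q j + a*m)).take m = x₀ := by
    intro j hj a ha
    have := hseg j hj a 1 (by omega)
    simpa using this
  have htne : ∀ j ∈ G, t j ≠ x₀ := by
    intro j hj
    have := hcomp j
    rw [hGmem j hj] at this
    exact this
  have htlen : ∀ j ∈ G, (t j).length = m := by
    intro j hj
    rw [ht]
    simp only [List.length_take, List.length_drop]
    have := hbound' j hj
    omega
  have htakeblk : ∀ j ∈ G, ∀ a : ℕ, a < 2*n → ∀ e', e' ≤ m →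
      (W.drop (q j + a*m)).take e' = x₀.take e' := by
    intro j hj a ha e' he'
    rw [← hblk j hj a ha, List.take_take, Nat.min_eq_left he']
  have htaketail : ∀ j ∈ G, ∀ e', e' ≤ m →
      (W.drop (q j + 2*n*m)).take e' = (t j).take e' := by
    intro j hj e' he'
    rw [ht]
    simp only
    rw [List.take_take, Nat.min_eq_left he']
  have hgetblk : ∀ j ∈ G, ∀ a : ℕ, a < 2*n → ∀ e', e' < m →
      W[q j + a*m + e']? = x₀[e']? := by
    intro j hj a ha e' he'
    rw [← gtd W (q j + a*m) m e' he', hblk j hj a ha]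
  have hgettail : ∀ j ∈ G, ∀ e', e' < m → W[q j + 2*n*m + e']? = (t j)[e']? := by
    intro j hj e' he'
    rw [← gtd W (q j + 2*n*m) m e' he', ht]
  -- split into the two tail classes
  set Hi := G.filter (fun j => x₀ < t j) with hHi
  set Lo := G.filter (fun j => ¬ x₀ < t j) with hLo
  have hHiLo : Hi.card + Lo.card = G.card := Finset.card_filter_add_card_filter_not _
  have htlo : ∀ j ∈ Lo, t j < x₀ := by
    intro j hj
    have hjG : j ∈ G := (Finset.mem_filter.mp hj).1
    have h1 : ¬ x₀ < t j := (Finset.mem_filter.mp hj).2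
    rcases lt_or_gt_of_ne (htne j hjG) with h | h
    · exact h
    · exact absurd h h1
  have hcase : n ≤ Hi.card ∨ n ≤ Lo.card := by omega
  rcases hcase with hc | hc
  · -- tails above the period
    obtain ⟨S, hSsub, hScard⟩ := Finset.exists_subset_card_eq hc
    have hSG : ∀ j ∈ S, j ∈ G := fun j hj => (Finset.mem_filter.mp (hSsub hj)).1
    have hShi : ∀ j ∈ S, x₀ < t j := fun j hj => (Finset.mem_filter.mp (hSsub hj)).2
    set e := S.orderIsoOfFin hScard with he
    set pp : ℕ → ℕ := fun i => if h : i < n then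
      q (e ⟨i, h⟩ : Fin s) + (2*n - (i+1))*m else 0 with hpp
    have hemem : ∀ i : Fin n, (e i : Fin s) ∈ S := fun i => (e i).2
    have hqmono : ∀ (i i' : Fin n), i < i' →
        q (e i : Fin s) + 2*n*m + n ≤ q (e i' : Fin s) := by
      intro i i' hii
      exact hsep' _ (hSG _ (hemem i)) _ (hSG _ (hemem i')) (e.strictMono hii)
    refine hW (chain_div hn W pp ?_ ?_)
    · intro i j hij hj
      have hi : i < n := by omega
      simp only [hpp, dif_pos hi, dif_pos hj]
      have h1 := hqmono ⟨i, hi⟩ ⟨j, hj⟩ (by simpa using hij)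
      have h2 : (2*n - (i+1))*m ≤ 2*n*m := Nat.mul_le_mul_right m (by omega)
      omega
    · intro i hi
      have hi' : i < n := by omega
      set j1 := (e ⟨i, hi'⟩ : Fin s) with hj1
      set j2 := (e ⟨i+1, hi⟩ : Fin s) with hj2
      have hj1G : j1 ∈ G := hSG _ (hemem _)
      have hj2G : j2 ∈ G := hSG _ (hemem _)
      have hlt12 : q j1 + 2*n*m + n ≤ q j2 := hqmono ⟨i, hi'⟩ ⟨i+1, hi⟩ (by simp)
      obtain ⟨e', he', hteq, u, v, hu, hv, huv⟩ :=
        lexdiff (hShi j1 (hemem _)) (by rw [htlen j1 hj1G])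
      rw [htlen j1 hj1G] at he'
      set d := (i+1)*m + e' with hd
      have hE1 : (2*n - (i+1))*m + (i+1)*m = 2*n*m := by
        rw [← Nat.add_mul]
        congr 1
        omega
      have hE2 : (2*n - (i+2))*m + (i+1)*m = (2*n-1)*m := by
        rw [← Nat.add_mul]
        congr 1
        omega
      have hE3 : (2*n-1)*m + m = 2*n*m := by
        have : (2*n-1)*m + m = ((2*n-1)+1)*m := by ring
        rw [this]
        congr 1
        omega
      have hppi : pp i = q j1 + (2*n - (i+1))*m := by
        simp only [hpp, dif_pos hi']; rfl
      have hppi1 : pp (i+1) = q j2 + (2*n - (i+2))*m := by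
        simp only [hpp, dif_pos hi]; rfl
      refine ⟨d, ?_, ?_, ?_, v, u, ?_, ?_, huv⟩
      · -- pp i + d < pp (i+1)
        rw [hppi, hppi1, hd]
        have hb2 := hbound' j1 hj1G
        omega
      · -- pp (i+1) + d < W.length
        rw [hppi1, hd]
        have hb2 := hbound' j2 hj2G
        omega
      · -- take agreement
        rw [hppi, hppi1, hd]
        rw [List.take_add, List.take_add]
        have hL1 : (W.drop (q j1 + (2*n - (i+1))*m)).take ((i+1)*m)
            = (List.replicate (i+1) x₀).flatten := hseg j1 hj1G _ _ (by omega)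
        have hR1 : (W.drop (q j2 + (2*n - (i+2))*m)).take ((i+1)*m)
            = (List.replicate (i+1) x₀).flatten := hseg j2 hj2G _ _ (by omega)
        have hL2 : (W.drop (q j1 + (2*n - (i+1))*m)).drop ((i+1)*m)
            = W.drop (q j1 + 2*n*m) := by
          rw [List.drop_drop, add_assoc, hE1]
        have hR2 : (W.drop (q j2 + (2*n - (i+2))*m)).drop ((i+1)*m)
            = W.drop (q j2 + (2*n-1)*m) := by
          rw [List.drop_drop, add_assoc, hE2]
        rw [hL1, hR1, hL2, hR2]
        congr 1
        have h1 : (W.drop (q j1 + 2*n*m)).take e' = (t j1).take e' :=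
          htaketail j1 hj1G e' (by omega)
        have h2 : (W.drop (q j2 + (2*n-1)*m)).take e' = x₀.take e' :=
          htakeblk j2 hj2G (2*n-1) (by omega) e' (by omega)
        rw [h1, h2, ← hteq]
      · -- left get
        have harith : pp i + d = q j1 + 2*n*m + e' := by
          rw [hppi, hd]; omega
        rw [harith, hgettail j1 hj1G e' he', hv]
      · -- right get
        have harith : pp (i+1) + d = q j2 + (2*n-1)*m + e' := by
          rw [hppi1, hd]; omega
        rw [harith, hgetblk j2 hj2G (2*n-1) (by omega) e' he', hu]
  · -- tails below the period
    obtain ⟨S, hSsub, hScard⟩ := Finset.exists_subset_card_eq hc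
    have hSG : ∀ j ∈ S, j ∈ G := fun j hj => (Finset.mem_filter.mp (hSsub hj)).1
    have hSlo : ∀ j ∈ S, t j < x₀ := fun j hj => htlo j (hSsub hj)
    set e := S.orderIsoOfFin hScard with he
    set pp : ℕ → ℕ := fun i => if h : i < n then
      q (e ⟨i, h⟩ : Fin s) + (n + i)*m else 0 with hpp
    have hemem : ∀ i : Fin n, (e i : Fin s) ∈ S := fun i => (e i).2
    have hqmono : ∀ (i i' : Fin n), i < i' →
        q (e i : Fin s) + 2*n*m + n ≤ q (e i' : Fin s) := by
      intro i i' hii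
      exact hsep' _ (hSG _ (hemem i)) _ (hSG _ (hemem i')) (e.strictMono hii)
    refine hW (chain_div hn W pp ?_ ?_)
    · intro i j hij hj
      have hi : i < n := by omega
      simp only [hpp, dif_pos hi, dif_pos hj]
      have h1 := hqmono ⟨i, hi⟩ ⟨j, hj⟩ (by simpa using hij)
      have h2 : (n + i)*m ≤ 2*n*m := Nat.mul_le_mul_right m (by omega)
      omega
    · intro i hi
      have hi' : i < n := by omega
      set j1 := (e ⟨i, hi'⟩ : Fin s) with hj1
      set j2 := (e ⟨i+1, hi⟩ : Fin s) with hj2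
      have hj1G : j1 ∈ G := hSG _ (hemem _)
      have hj2G : j2 ∈ G := hSG _ (hemem _)
      have hlt12 : q j1 + 2*n*m + n ≤ q j2 := hqmono ⟨i, hi'⟩ ⟨i+1, hi⟩ (by simp)
      obtain ⟨e', he', hteq, u, v, hu, hv, huv⟩ :=
        lexdiff (hSlo j2 (hemem _)) (by rw [htlen j2 hj2G])
      rw [← hm] at he'
      set d := (n - (i+1))*m + e' with hd
      have hE1 : (n + i)*m + (n - (i+1))*m = (2*n-1)*m := by
        rw [← Nat.add_mul]
        congr 1
        omega
      have hE2 : (n + (i+1))*m + (n - (i+1))*m = 2*n*m := by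
        rw [← Nat.add_mul]
        congr 1
        omega
      have hppi : pp i = q j1 + (n + i)*m := by
        simp only [hpp, dif_pos hi']; rfl
      have hppi1 : pp (i+1) = q j2 + (n + (i+1))*m := by
        simp only [hpp, dif_pos hi]; rfl
      have hd2 : (n - (i+1))*m ≤ (2*n-1)*m := Nat.mul_le_mul_right m (by omega)
      have hE5 : (n + (i+1))*m = (n + i)*m + m := by
        have h6 : n + (i+1) = (n + i) + 1 := by omega
        rw [h6, Nat.add_mul, one_mul]
      refine ⟨d, ?_, ?_, ?_, v, u, ?_, ?_, huv⟩
      · rw [hppi, hppi1, hd]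
        have hb2 := hbound' j1 hj1G
        have h3 : (n + i)*m + ((n - (i+1))*m + e') = (2*n-1)*m + e' := by omega
        omega
      · rw [hppi1, hd]
        have hb2 := hbound' j2 hj2G
        have h3 : (n + (i+1))*m + ((n - (i+1))*m + e') = 2*n*m + e' := by omega
        omega
      · rw [hppi, hppi1, hd]
        rw [List.take_add, List.take_add]
        have hL1 : (W.drop (q j1 + (n + i)*m)).take ((n - (i+1))*m)
            = (List.replicate (n - (i+1)) x₀).flatten := hseg j1 hj1G _ _ (by omega)
        have hR1 : (W.drop (q j2 + (n + (i+1))*m)).take ((n - (i+1))*m)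
            = (List.replicate (n - (i+1)) x₀).flatten := hseg j2 hj2G _ _ (by omega)
        have hL2 : (W.drop (q j1 + (n + i)*m)).drop ((n - (i+1))*m)
            = W.drop (q j1 + (2*n-1)*m) := by
          rw [List.drop_drop, add_assoc, hE1]
        have hR2 : (W.drop (q j2 + (n + (i+1))*m)).drop ((n - (i+1))*m)
            = W.drop (q j2 + 2*n*m) := by
          rw [List.drop_drop, add_assoc, hE2]
        rw [hL1, hR1, hL2, hR2]
        congr 1
        have h1 : (W.drop (q j1 + (2*n-1)*m)).take e' = x₀.take e' :=
          htakeblk j1 hj1G (2*n-1) (by omega) e' (by omega)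
        have h2 : (W.drop (q j2 + 2*n*m)).take e' = (t j2).take e' :=
          htaketail j2 hj2G e' (by omega)
        rw [h1, h2, ← hteq]
      · have harith : pp i + d = q j1 + (2*n-1)*m + e' := by
          rw [hppi, hd]
          have h3 : (n + i)*m + ((n - (i+1))*m + e') = (2*n-1)*m + e' := by omega
          omega
        rw [harith, hgetblk j1 hj1G (2*n-1) (by omega) e' he', hv]
      · have harith : pp (i+1) + d = q j2 + 2*n*m + e' := by
          rw [hppi1, hd]
          have h3 : (n + (i+1))*m + ((n - (i+1))*m + e') = 2*n*m + e' := by omega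
          omega
        rw [harith, hgettail j2 hj2G e' he', hu]

end Aux
namespace Aux

lemma nat_le_pow_ceil_logb {n : ℕ} (hn : 2 ≤ n) : n ≤ 3 ^ ⌈Real.logb 3 (n : ℝ)⌉₊ := by
  have hnpos : (0:ℝ) < n := by positivity
  have h1 : (n:ℝ) = (3:ℝ) ^ (Real.logb 3 (n:ℝ)) :=
    (Real.rpow_logb (by norm_num) (by norm_num) hnpos).symm
  have h2 : Real.logb 3 (n:ℝ) ≤ (⌈Real.logb 3 (n:ℝ)⌉₊ : ℝ) := Nat.le_ceil _
  have h3 : (3:ℝ) ^ (Real.logb 3 (n:ℝ)) ≤ (3:ℝ) ^ ((⌈Real.logb 3 (n:ℝ)⌉₊ : ℝ)) :=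
    Real.rpow_le_rpow_of_exponent_le (by norm_num) h2
  have h4 : (3:ℝ) ^ ((⌈Real.logb 3 (n:ℝ)⌉₊ : ℝ)) = ((3 ^ ⌈Real.logb 3 (n:ℝ)⌉₊ : ℕ) : ℝ) := by
    rw [Real.rpow_natCast]
    push_cast
    ring
  have h5 : (n:ℝ) ≤ ((3 ^ ⌈Real.logb 3 (n:ℝ)⌉₊ : ℕ) : ℝ) :=
    h1.trans_le (h3.trans_eq h4)
  exact_mod_cast h5

lemma pow_ceil_logb_le {n : ℕ} (hn : 2 ≤ n) : 3 ^ ⌈Real.logb 3 (n : ℝ)⌉₊ ≤ n ^ 2 := by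
  rcases eq_or_lt_of_le hn with rfl | hn3
  · have h1 : Real.logb 3 ((2:ℕ) : ℝ) ≤ 1 := by
      unfold Real.logb
      rw [div_le_one (Real.log_pos (by norm_num))]
      exact Real.log_le_log (by norm_num) (by norm_num)
    have h2 : ⌈Real.logb 3 ((2:ℕ) : ℝ)⌉₊ ≤ 1 := Nat.ceil_le.mpr (by exact_mod_cast h1)
    calc 3 ^ ⌈Real.logb 3 ((2:ℕ) : ℝ)⌉₊ ≤ 3 ^ 1 := Nat.pow_le_pow_right (by omega) h2
      _ ≤ 2 ^ 2 := by norm_num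
  · have hn3' : 3 ≤ n := hn3
    have hnpos : (0:ℝ) < n := by positivity
    have h0 : 0 ≤ Real.logb 3 (n:ℝ) :=
      Real.logb_nonneg (by norm_num) (by exact_mod_cast (by omega : 1 ≤ n))
    have h1 : (⌈Real.logb 3 (n:ℝ)⌉₊ : ℝ) < Real.logb 3 (n:ℝ) + 1 :=
      Nat.ceil_lt_add_one h0
    have h2 : ((3 ^ ⌈Real.logb 3 (n:ℝ)⌉₊ : ℕ) : ℝ) < (3:ℝ) ^ (Real.logb 3 (n:ℝ) + 1) := by
      have hh := Real.rpow_lt_rpow_of_exponent_lt (by norm_num : (1:ℝ) < 3) h1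
      calc ((3 ^ ⌈Real.logb 3 (n:ℝ)⌉₊ : ℕ) : ℝ)
          = (3:ℝ) ^ ((⌈Real.logb 3 (n:ℝ)⌉₊ : ℝ)) := by
            rw [Real.rpow_natCast]; push_cast; ring
        _ < (3:ℝ) ^ (Real.logb 3 (n:ℝ) + 1) := hh
    have h3 : (3:ℝ) ^ (Real.logb 3 (n:ℝ) + 1) = 3 * (n:ℝ) := by
      rw [Real.rpow_add (by norm_num), Real.rpow_logb (by norm_num) (by norm_num) hnpos]
      ring
    have h5 : 3 ^ ⌈Real.logb 3 (n:ℝ)⌉₊ < 3 * n := by exact_mod_cast h2.trans_eq h3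
    calc 3 ^ ⌈Real.logb 3 (n:ℝ)⌉₊ ≤ 3 * n := by omega
      _ ≤ n * n := Nat.mul_le_mul_right n hn3'
      _ = n ^ 2 := by ring

end Aux

/-- Theorem (essential height): in any non-`n`-divisible word `W` over an `l`-letter
alphabet, the number `s` of pairwise disjoint periodic fragments `x^(2n)` (with `|x| < n`,
each fragment followed by a word of the period's length differing from the period, and
consecutive fragments separated by at least `n` positions) is less than
`Υ(n,l) = 2·n^(3·⌈log₃ n⌉+4)·l`. -/
theorem stmt_18 (l n : ℕ) (hl : 1 ≤ l) (hn : 2 ≤ n) (W : List (Fin l))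
    (hW : ¬ IsNDivisible n W) (s : ℕ)
    (x : Fin s → List (Fin l)) (q : Fin s → ℕ)
    (hxlen : ∀ j, (x j).length < n) (hxne : ∀ j, x j ≠ [])
    (hocc : ∀ j, (W.drop (q j)).take (2 * n * (x j).length) =
      (List.replicate (2 * n) (x j)).flatten)
    (hcomp : ∀ j, (W.drop (q j + 2 * n * (x j).length)).take (x j).length ≠ x j)
    (hbound : ∀ j, q j + 2 * n * (x j).length + (x j).length ≤ W.length)
    (hsep : ∀ j k : Fin s, j < k → q j + 2 * n * (x j).length + n ≤ q k) :
    s < 2 * n ^ (3 * ⌈Real.logb 3 (n : ℝ)⌉₊ + 4) * l := by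
  classical
  set K := ⌈Real.logb 3 (n : ℝ)⌉₊ with hK
  have hnK : n ≤ 3 ^ K := Aux.nat_le_pow_ceil_logb hn
  have hK2 : 3 ^ K ≤ n ^ 2 := Aux.pow_ceil_logb_le hn
  set B := 3 ^ K * (n-1) ^ (3*K) * l with hB
  -- value of the word at each fragment start
  have hval : ∀ j : Fin s, (W.drop (q j)).take ((x j).length) = x j := by
    intro j
    have h0 := hocc j
    have h1 : (x j).length ≤ 2 * n * (x j).length := by
      have := hxne j
      have h2 : 1 ≤ (x j).length := List.length_pos_iff.mpr this
      calc (x j).length = 1 * (x j).length := by ring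
        _ ≤ 2 * n * (x j).length := Nat.mul_le_mul_right _ (by omega)
    have h2 : 2 * n = (2*n - 1) + 1 := by omega
    calc (W.drop (q j)).take ((x j).length)
        = ((W.drop (q j)).take (2 * n * (x j).length)).take ((x j).length) := by
          rw [List.take_take, Nat.min_eq_left h1]
      _ = ((List.replicate (2*n) (x j)).flatten).take ((x j).length) := by rw [h0]
      _ = ((x j) ++ (List.replicate (2*n - 1) (x j)).flatten).take ((x j).length) := by
          conv_lhs => rw [h2, Aux.flat_succ]
      _ = x j := List.take_left ..
  -- q is strictly monotone
  have hqmono : ∀ j k : Fin s, j < k → q j < q k := by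
    intro j k hjk
    have := hsep j k hjk
    omega
  -- per-length fiber bound
  have hJm : ∀ m ∈ Finset.Icc 1 (n-1),
      (Finset.univ.filter (fun j : Fin s => (x j).length = m)).card ≤ (2*n-2) * B := by
    intro m hm
    rw [Finset.mem_Icc] at hm
    set J := Finset.univ.filter (fun j : Fin s => (x j).length = m) with hJ
    have hJlen : ∀ j ∈ J, (x j).length = m := fun j hj => (Finset.mem_filter.mp hj).2
    -- fiberwise over period values
    have h1 : J.card = ∑ v ∈ J.image x, (J.filter (fun j => x j = v)).card :=
      Finset.card_eq_sum_card_fiberwise (fun j hj => Finset.mem_image_of_mem x hj)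
    have h2 : ∀ v ∈ J.image x, (J.filter (fun j => x j = v)).card ≤ 2*n - 2 := by
      intro v _
      calc (J.filter (fun j => x j = v)).card
          ≤ (Finset.univ.filter (fun j : Fin s => x j = v)).card := by
            apply Finset.card_le_card
            intro a ha
            rw [Finset.mem_filter] at ha ⊢
            exact ⟨Finset.mem_univ a, ha.2⟩
        _ ≤ 2*n - 2 := Aux.fiberB hn W hW x q hxlen hxne hocc hcomp hbound hsep v
    -- first occurrences
    set J' := J.filter (fun j => ∀ k ∈ J, k < j → x k ≠ x j) with hJ'
    have hJ'J : J' ⊆ J := Finset.filter_subset _ _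
    have him : J.image x ⊆ J'.image x := by
      intro v hv
      obtain ⟨j₁, hj₁, rfl⟩ := Finset.mem_image.mp hv
      set Q := J.filter (fun j => x j = x j₁) with hQ
      have hQne : Q.Nonempty := ⟨j₁, by simp [hQ, hj₁]⟩
      set q₀ := Q.min' hQne with hq₀
      have hq₀Q : q₀ ∈ Q := Finset.min'_mem _ _
      have hq₀J : q₀ ∈ J := (Finset.mem_filter.mp hq₀Q).1
      have hq₀v : x q₀ = x j₁ := (Finset.mem_filter.mp hq₀Q).2
      refine Finset.mem_image.mpr ⟨q₀, ?_, hq₀v⟩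
      rw [hJ', Finset.mem_filter]
      refine ⟨hq₀J, ?_⟩
      intro k hk hlt heq
      have hkQ : k ∈ Q := by
        rw [hQ, Finset.mem_filter]
        exact ⟨hk, by rw [heq, hq₀v]⟩
      have := Finset.min'_le Q k hkQ
      exact absurd hlt (by omega)
    have hinjJ' : Set.InjOn x ↑J' := by
      intro a ha b hb heq
      simp only [Finset.mem_coe] at ha hb
      by_contra hne
      rcases lt_or_gt_of_ne hne with hlt | hlt
      · exact (Finset.mem_filter.mp hb).2 a (hJ'J ha) hlt heq
      · exact (Finset.mem_filter.mp ha).2 b (hJ'J hb) hlt heq.symm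
    -- positions
    set P := J'.image (fun j => q j) with hP
    have hqinj : Set.InjOn (fun j => q j) ↑J' := by
      intro a ha b hb heq
      by_contra hne
      rcases lt_or_gt_of_ne hne with hlt | hlt
      · have := hqmono a b hlt; simp only at heq; omega
      · have := hqmono b a hlt; simp only at heq; omega
    have hPcard : P.card = J'.card := Finset.card_image_of_injOn hqinj
    have hm1 : 1 ≤ m := hm.1
    have hm3K : m ≤ 3 ^ K := by omega
    have hmn : m < n := by omega
    have hPB : P.card ≤ B := by
      rw [hB]
      apply Aux.lemR hn W hW K m hm1 hm3K hmn P
      · intro p hp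
        obtain ⟨j, hj, rfl⟩ := Finset.mem_image.mp hp
        have h3 := hbound j
        have h4 := hJlen j (hJ'J hj)
        rw [h4] at h3
        omega
      · intro p hp p' hp' hlt
        obtain ⟨j, hj, rfl⟩ := Finset.mem_image.mp hp
        obtain ⟨k, hk, rfl⟩ := Finset.mem_image.mp hp'
        have hjk : j < k := by
          by_contra hc
          push_neg at hc
          rcases eq_or_lt_of_le hc with rfl | hc'
          · omega
          · have := hqmono k j hc'; omega
        have h3 := hsep j k hjk
        omega
      · intro a ha b hb heq
        simp only [Finset.mem_coe] at ha hb
        obtain ⟨j, hj, rfl⟩ := Finset.mem_image.mp ha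
        obtain ⟨k, hk, rfl⟩ := Finset.mem_image.mp hb
        simp only at heq
        have h4 : (W.drop (q j)).take m = x j := by
          rw [← hJlen j (hJ'J hj)]; exact hval j
        have h5 : (W.drop (q k)).take m = x k := by
          rw [← hJlen k (hJ'J hk)]; exact hval k
        rw [h4, h5] at heq
        rw [hinjJ' hj hk heq]
    have h6 : (J.image x).card ≤ B :=
      calc (J.image x).card ≤ (J'.image x).card := Finset.card_le_card him
        _ = J'.card := Finset.card_image_of_injOn hinjJ'
        _ = P.card := hPcard.symm
        _ ≤ B := hPB
    calc J.card = ∑ v ∈ J.image x, (J.filter (fun j => x j = v)).card := h1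
      _ ≤ (J.image x).card • (2*n - 2) := Finset.sum_le_card_nsmul _ _ _ h2
      _ = (J.image x).card * (2*n - 2) := smul_eq_mul _ _
      _ ≤ B * (2*n-2) := Nat.mul_le_mul_right _ h6
      _ = (2*n-2) * B := by ring
  -- sum over lengths
  have hlenmem : ∀ j : Fin s, j ∈ Finset.univ → (x j).length ∈ Finset.Icc 1 (n-1) := by
    intro j _
    rw [Finset.mem_Icc]
    have h1 := hxlen j
    have h2 : 1 ≤ (x j).length := List.length_pos_iff.mpr (hxne j)
    omega
  have hsum : s = ∑ m ∈ Finset.Icc 1 (n-1),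
      (Finset.univ.filter (fun j : Fin s => (x j).length = m)).card := by
    have := Finset.card_eq_sum_card_fiberwise hlenmem
    simpa using this
  have hstot : s ≤ (n-1) * ((2*n-2) * B) := by
    calc s = ∑ m ∈ Finset.Icc 1 (n-1),
        (Finset.univ.filter (fun j : Fin s => (x j).length = m)).card := hsum
      _ ≤ (Finset.Icc 1 (n-1)).card • ((2*n-2) * B) := Finset.sum_le_card_nsmul _ _ _ hJm
      _ = (n-1) * ((2*n-2) * B) := by
          rw [smul_eq_mul, Nat.card_Icc]
          congr 1
  -- numeric comparison
  have hfin : (n-1) * ((2*n-2) * B) < 2 * n ^ (3*K + 4) * l := by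
    rw [hB]
    have e1 : (n-1) * ((2*n-2) * (3^K * (n-1)^(3*K) * l))
        = 2 * ((n-1)^(3*K+2) * 3^K) * l := by
      have h7 : 2*n - 2 = 2 * (n-1) := by omega
      rw [h7]
      ring
    rw [e1]
    have e2 : (n-1)^(3*K+2) * 3^K < n^(3*K+2) * n^2 := by
      have h8 : (n-1)^(3*K+2) * 3^K ≤ (n-1)^(3*K+2) * n^2 :=
        Nat.mul_le_mul_left _ hK2
      have h9 : (n-1)^(3*K+2) < n^(3*K+2) :=
        Nat.pow_lt_pow_left (by omega) (by omega)
      have h10 : (n-1)^(3*K+2) * n^2 < n^(3*K+2) * n^2 :=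
        (Nat.mul_lt_mul_right (by positivity)).mpr h9
      omega
    have e3 : n^(3*K+2) * n^2 = n^(3*K+4) := by
      rw [← pow_add]
    calc 2 * ((n-1)^(3*K+2) * 3^K) * l < 2 * (n^(3*K+2) * n^2) * l := by
          apply (Nat.mul_lt_mul_right (by omega : 0 < l)).mpr
          omega
      _ = 2 * n^(3*K+4) * l := by rw [e3]
  omega
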